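/- For all integers 0 ≤ k ≤ j, the following identity holds in ℚ(q, a): ∑_{h=0}^{k} (−q)^{h−j} a^{h−j} q^{j² + h² − 2kh} [j−h; k−h]_+ [j; h]_+ = (−q)^{−j} a^{−j} q^{j²} (a q^{2−2k}; q²)_k [j; k]_+. (This is the product form of the rescaled right twist rule applied to the basis web UP[j,k].) -/

import Mathlib

noncomputable section

open Finset

/-- The field `ℚ(q, a)` of rational functions in two variables. -/
abbrev F : Type := FractionRing (MvPolynomial (Fin 2) ℚ)

/-- The variable `q`. -/
def q : F := algebraMap (MvPolynomial (Fin 2) ℚ) F (MvPolynomial.X 0)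

/-- The variable `a`. -/
def a : F := algebraMap (MvPolynomial (Fin 2) ℚ) F (MvPolynomial.X 1)

/-- The q-Pochhammer symbol `(x; y)_n = ∏_{j=0}^{n-1} (1 - x yʲ)`. -/
def qPoch (x y : F) (n : ℕ) : F := ∏ i ∈ Finset.range n, (1 - x * y ^ i)

/-- `(q²;q²)_m = ∏_{i=1}^{m} (1 - q^{2i})`. -/
def qp (m : ℕ) : F := qPoch (q ^ 2) (q ^ 2) m

/-- The positive quantum binomial coefficient `[N; k]₊`. -/
def qbin (N k : ℕ) : F := qp N / (qp k * qp (N - k))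


/-! ### Auxiliary lemmas -/

lemma amap_inj : Function.Injective (algebraMap (MvPolynomial (Fin 2) ℚ) F) :=
  IsFractionRing.injective _ _

lemma hq : q ≠ 0 := by
  simp only [q]
  intro h
  have := amap_inj (h.trans (map_zero _).symm)
  exact MvPolynomial.X_ne_zero _ this

lemma ha : a ≠ 0 := by
  simp only [a]
  intro h
  have := amap_inj (h.trans (map_zero _).symm)
  exact MvPolynomial.X_ne_zero _ this

lemma q_pow_ne_one (n : ℕ) (hn : n ≠ 0) : q ^ n ≠ 1 := by
  intro h
  rw [q, ← map_pow, ← map_one (algebraMap (MvPolynomial (Fin 2) ℚ) F)] at h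
  have h2 := amap_inj h
  have := congrArg (MvPolynomial.eval (fun _ => (0:ℚ))) h2
  simp [zero_pow hn] at this

lemma qp_ne (m : ℕ) : qp m ≠ 0 := by
  rw [qp, qPoch]
  apply Finset.prod_ne_zero_iff.2
  intro i _
  intro h
  apply q_pow_ne_one (2 + 2*i) (by omega)
  have : q ^ (2 + 2*i) = q^2 * (q^2)^i := by ring
  rw [this]
  linear_combination -h

lemma qp_zero : qp 0 = 1 := by simp [qp, qPoch]

lemma qp_succ (m : ℕ) : qp (m+1) = qp m * (1 - q^(2*m+2)) := by
  rw [qp, qp, qPoch, qPoch, Finset.prod_range_succ]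
  ring

lemma qbin_zero (n : ℕ) : qbin n 0 = 1 := by
  rw [qbin, qp_zero, Nat.sub_zero, one_mul, div_self (qp_ne n)]

lemma qbin_self (n : ℕ) : qbin n n = 1 := by
  rw [qbin, Nat.sub_self, qp_zero, mul_one, div_self (qp_ne n)]

lemma fac_ne (m : ℕ) : (1:F) - q^(2*m+2) ≠ 0 :=
  sub_ne_zero.mpr (Ne.symm (q_pow_ne_one _ (by omega)))

/-- The quantum binomial coefficient extended by `0` out of range. -/
def qb (N k : ℕ) : F := if k ≤ N then qbin N k else 0

lemma qb_eq {N k : ℕ} (h : k ≤ N) : qb N k = qbin N k := if_pos h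

lemma pascal (k h : ℕ) : qb (k+1) (h+1) = qb k (h+1) + q^(2*(k-h)) * qb k h := by
  rcases lt_trichotomy h k with hlt | rfl | hgt
  · obtain ⟨m, rfl⟩ : ∃ m, k = h + 1 + m := ⟨k - h - 1, by omega⟩
    rw [qb_eq (by omega), qb_eq (by omega), qb_eq (by omega)]
    rw [qbin, qbin, qbin]
    rw [show h + 1 + m + 1 - (h+1) = m + 1 from by omega,
        show h + 1 + m - (h+1) = m from by omega,
        show h + 1 + m - h = m + 1 from by omega]
    rw [show h + 1 + m + 1 = (h + m + 1) + 1 from by omega, qp_succ (h+m+1),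
        show h + 1 + m = (h + m) + 1 from by omega, qp_succ (h+m),
        qp_succ m, qp_succ h]
    field_simp [qp_ne, fac_ne]
    ring
  · rw [qb_eq (le_refl _), qbin_self, qb_eq (le_refl _), qbin_self,
        show qb h (h+1) = 0 from if_neg (by omega), Nat.sub_self]
    ring
  · rw [show qb (k+1) (h+1) = 0 from if_neg (by omega),
        show qb k (h+1) = 0 from if_neg (by omega),
        show qb k h = 0 from if_neg (by omega)]
    ring

lemma exp_arith {h k : ℕ} (hh : h ≤ k) : (h+1)*h + 2*(k-h) = h*(h-1) + 2*k := by
  obtain ⟨d, rfl⟩ : ∃ d, k = h + d := ⟨k-h, by omega⟩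
  rw [Nat.add_sub_cancel_left]
  cases h with
  | zero => omega
  | succ n => simp only [Nat.succ_sub_one]; ring

lemma gauss (x y : F) (k : ℕ) :
    ∑ h ∈ range (k+1), (-1:F)^h * q^(h*(h-1)) * y^h * x^(k-h) * qb k h
      = ∏ i ∈ range k, (x - y * q^(2*i)) := by
  induction k with
  | zero => simp [qb_eq, qbin_zero]
  | succ k ih =>
    rw [prod_range_succ, ← ih, Finset.sum_range_succ']
    simp only [Nat.add_sub_cancel]
    have key : ∀ h ∈ range (k+1),
        (-1:F)^(h+1) * q^((h+1)*h) * y^(h+1) * x^(k+1-(h+1)) * qb (k+1) (h+1)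
        = ((-1:F)^(h+1) * q^((h+1)*h) * y^(h+1) * x^(k-h) * qb k (h+1))
          + (-(y * q^(2*k)) * ((-1:F)^h * q^(h*(h-1)) * y^h * x^(k-h) * qb k h)) := by
      intro h hh
      rw [mem_range] at hh
      rw [pascal, Nat.succ_sub_succ, mul_add]
      congr 1
      rw [show ((-1:F)^(h+1) * q^((h+1)*h) * y^(h+1) * x^(k-h) * (q^(2*(k-h)) * qb k h))
            = -((-1:F)^h * (q^((h+1)*h) * q^(2*(k-h))) * (y * y^h) * x^(k-h) * qb k h) from by ring,
          ← pow_add, exp_arith (by omega : h ≤ k), pow_add]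
      ring
    rw [Finset.sum_congr rfl key, Finset.sum_add_distrib, ← Finset.mul_sum]
    have top : ((-1:F)^(k+1) * q^((k+1)*k) * y^(k+1) * x^(k-k) * qb k (k+1)) = 0 := by
      rw [show qb k (k+1) = 0 from if_neg (by omega)]; ring
    have e2 : (∑ h ∈ range (k+1), (-1:F)^(h+1) * q^((h+1)*h) * y^(h+1) * x^(k-h) * qb k (h+1))
        + ((-1:F)^0 * q^(0*(0-1)) * y^0 * x^(k+1-0) * qb (k+1) 0)
        = (∑ h ∈ range (k+1), (-1:F)^h * q^(h*(h-1)) * y^h * x^(k-h) * qb k h) * x := by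
      rw [Finset.sum_mul, Finset.sum_range_succ' (fun h => ((-1:F)^h * q^(h*(h-1)) * y^h * x^(k-h) * qb k h) * x)]
      simp only [Nat.add_sub_cancel]
      rw [Finset.sum_range_succ, top, add_zero]
      congr 1
      · apply Finset.sum_congr rfl
        intro h hh
        rw [mem_range] at hh
        have hx : x^(k-(h+1)) * x = x^(k-h) := by
          rw [← pow_succ]; congr 1; omega
        rw [← hx]; ring
      · rw [qb_eq (by omega), qbin_zero, qb_eq (by omega), qbin_zero]
        simp
        ring
    linear_combination e2

lemma qbin_symm {n k : ℕ} (hk : k ≤ n) : qbin n (n - k) = qbin n k := by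
  rw [qbin, qbin, show n - (n-k) = k from by omega, mul_comm]

lemma trinomial {h k j : ℕ} (hh : h ≤ k) (hk : k ≤ j) :
    qbin (j-h) (k-h) * qbin j h = qbin j k * qbin k h := by
  obtain ⟨b, rfl⟩ : ∃ b, k = h + b := ⟨k-h, by omega⟩
  obtain ⟨c, rfl⟩ : ∃ c, j = h + b + c := ⟨j-h-b, by omega⟩
  rw [qbin, qbin, qbin, qbin,
      show h + b + c - h = b + c from by omega,
      show h + b - h = b from by omega,
      show b + c - b = c from by omega,
      show h + b + c - (h + b) = c from by omega]
  field_simp [qp_ne]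

lemma lemE (k : ℕ) :
    ∑ h ∈ range (k+1), (-q)^h * a^h * q^((k-h)*(k-h)) * qb k h
      = q^k * ∏ i ∈ range k, (q^(2*i) - a) := by
  have g := gauss a 1 k
  have hp : ∏ i ∈ range k, ((q:F)^(2*i) - a) = (-1:F)^k * ∏ i ∈ range k, (a - 1 * q^(2*i)) := by
    calc ∏ i ∈ range k, ((q:F)^(2*i) - a)
        = ∏ i ∈ range k, ((-1) * (a - 1 * q^(2*i))) := Finset.prod_congr rfl (by intros; ring)
      _ = (∏ _i ∈ range k, (-1:F)) * ∏ i ∈ range k, (a - 1 * q^(2*i)) := Finset.prod_mul_distrib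
      _ = (-1:F)^k * ∏ i ∈ range k, (a - 1 * q^(2*i)) := by rw [Finset.prod_const, card_range]
  rw [hp, ← g]
  rw [← Finset.sum_range_reflect
    (fun h => (-q)^h * a^h * q^((k-h)*(k-h)) * qb k h) (k+1)]
  rw [Finset.mul_sum, Finset.mul_sum]
  apply Finset.sum_congr rfl
  intro h hh
  rw [mem_range] at hh
  have hhk : h ≤ k := by omega
  rw [show k + 1 - 1 - h = k - h from by omega,
      show k - (k - h) = h from by omega,
      show qb k (k-h) = qb k h from by
        rw [qb_eq (by omega), qb_eq hhk, qbin_symm hhk]]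
  rw [neg_pow q (k-h)]
  have hsign : (-1:F)^(k-h) = (-1)^k * (-1)^h := by
    have h1 : ((-1:F))^(k-h) * (-1)^(h+h) = (-1)^k * (-1)^h := by
      rw [← pow_add, ← pow_add]; congr 1; omega
    rw [← h1, show h+h = 2*h from (two_mul h).symm, pow_mul]; norm_num
  have hqe : (q:F)^(k-h) * q^(h*h) = q^k * q^(h*(h-1)) := by
    rw [← pow_add, ← pow_add]; congr 1
    obtain ⟨d, rfl⟩ : ∃ d, k = h + d := ⟨k-h, by omega⟩
    rw [Nat.add_sub_cancel_left]
    cases h with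
    | zero => omega
    | succ n => simp only [Nat.succ_sub_one]; ring
  linear_combination (q^(k-h) * q^(h*h) * a^(k-h) * qb k h) * hsign
    + ((-1:F)^k * (-1)^h * a^(k-h) * qb k h) * hqe

lemma poch_eq (k : ℕ) :
    q^(k*k) * qPoch (a * q^(2 - 2*(k:ℤ))) (q^2) k
      = q^k * ∏ i ∈ range k, (q^(2*i) - a) := by
  have hpow : (q:F)^(k*k) = q^k * ∏ i ∈ range k, q^(2*(k-1-i)) := by
    rw [Finset.prod_pow_eq_pow_sum, ← pow_add]
    congr 1
    rw [Finset.sum_range_reflect (fun i => 2*i) k]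
    have h2 : ∑ i ∈ range k, 2*i = k*(k-1) := by
      rw [← Finset.mul_sum, ← Finset.sum_range_id_mul_two k]; ring
    rw [h2]
    cases k with
    | zero => rfl
    | succ n => simp only [Nat.succ_sub_one, Nat.add_sub_cancel_left]; ring
  have fact : ∀ i ∈ range k,
      (q:F)^(2*(k-1-i)) * (1 - a * q^(2 - 2*(k:ℤ)) * (q^2)^i) = q^(2*(k-1-i)) - a := by
    intro i hi
    rw [mem_range] at hi
    have hz : (q:F)^(2*(k-1-i)) * (a * q^(2 - 2*(k:ℤ)) * (q^2)^i) = a := by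
      have key : (q:F)^(2*(k-1-i)) * (q^(2 - 2*(k:ℤ)) * (q^2)^i) = 1 := by
        rw [← pow_mul, ← zpow_natCast q (2*(k-1-i)), ← zpow_natCast q (2*i),
            ← zpow_add₀ hq, ← zpow_add₀ hq]
        rw [show ((2*(k-1-i) : ℕ) : ℤ) + (2 - 2*(k:ℤ) + ((2*i : ℕ) : ℤ)) = 0 from by
              push_cast; omega]
        rfl
      linear_combination a * key
    rw [mul_sub, mul_one, hz]
  rw [qPoch, hpow, mul_assoc, ← Finset.prod_mul_distrib,
      Finset.prod_congr rfl fact,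
      ← Finset.prod_range_reflect (fun i => (q:F)^(2*i) - a) k]

/-- Product form of the rescaled right twist rule on `UP[j,k]`:
`∑_{h=0}^{k} (−q)^{h−j} a^{h−j} q^{j²+h²−2kh} [j−h;k−h]₊ [j;h]₊
 = (−q)^{−j} a^{−j} q^{j²} (a q^{2−2k};q²)_k [j;k]₊`. -/
theorem product_form_R_UP (j k : ℕ) (hk : k ≤ j) :
    ∑ h ∈ Finset.range (k + 1),
      (-q) ^ ((h : ℤ) - (j : ℤ)) * a ^ ((h : ℤ) - (j : ℤ)) *
        q ^ ((j : ℤ) ^ 2 + (h : ℤ) ^ 2 - 2 * (k : ℤ) * (h : ℤ)) *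
        qbin (j - h) (k - h) * qbin j h =
      (-q) ^ (-(j : ℤ)) * a ^ (-(j : ℤ)) * q ^ ((j : ℤ) ^ 2) *
        qPoch (a * q ^ (2 - 2 * (k : ℤ))) (q ^ 2) k * qbin j k := by
  have hnq : (-q) ≠ 0 := neg_ne_zero.mpr hq
  set D : F := (-q) ^ (-(j : ℤ)) * a ^ (-(j : ℤ)) * q ^ ((j : ℤ) ^ 2) * (q^(k*k))⁻¹ with hD
  have key : ∀ h ∈ range (k+1),
      (-q) ^ ((h : ℤ) - (j : ℤ)) * a ^ ((h : ℤ) - (j : ℤ)) *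
        q ^ ((j : ℤ) ^ 2 + (h : ℤ) ^ 2 - 2 * (k : ℤ) * (h : ℤ)) *
        qbin (j - h) (k - h) * qbin j h
      = D * ((-q)^h * a^h * q^((k-h)*(k-h)) * qb k h) * qbin j k := by
    intro h hh
    rw [mem_range] at hh
    have hhk : h ≤ k := by omega
    have z1 : (-q) ^ ((h : ℤ) - (j : ℤ)) = (-q)^h * (-q)^(-(j:ℤ)) := by
      rw [sub_eq_add_neg, zpow_add₀ hnq, zpow_natCast]
    have z2 : a ^ ((h : ℤ) - (j : ℤ)) = a^h * a^(-(j:ℤ)) := by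
      rw [sub_eq_add_neg, zpow_add₀ ha, zpow_natCast]
    have z3 : q ^ ((j : ℤ) ^ 2 + (h : ℤ) ^ 2 - 2 * (k : ℤ) * (h : ℤ))
        = q ^ ((j : ℤ) ^ 2) * (q^(k*k))⁻¹ * q^((k-h)*(k-h)) := by
      have hc : (((k-h)*(k-h) : ℕ) : ℤ) = ((k:ℤ)-h)^2 := by
        have h1 : ((k-h:ℕ):ℤ) = (k:ℤ)-h := by omega
        rw [Nat.cast_mul, h1]; ring
      have he : (j:ℤ)^2+(h:ℤ)^2-2*(k:ℤ)*(h:ℤ)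
          = (j:ℤ)^2 + (-(((k*k:ℕ)):ℤ)) + (((k-h)*(k-h) : ℕ):ℤ) := by
        rw [hc]; push_cast; ring
      rw [he, zpow_add₀ hq, zpow_add₀ hq, zpow_neg, zpow_natCast, zpow_natCast]
    rw [z1, z2, z3, mul_assoc _ (qbin (j-h) (k-h)) (qbin j h), trinomial hhk hk,
        qb_eq hhk, hD]
    ring
  rw [Finset.sum_congr rfl key, ← Finset.sum_mul, ← Finset.mul_sum, lemE k, ← poch_eq k]
  have hqk : (q:F)^(k*k) ≠ 0 := pow_ne_zero _ hq
  have cancel : ((q:F)^(k*k))⁻¹ * (q^(k*k)) = 1 := inv_mul_cancel₀ hqk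
  rw [hD]
  linear_combination ((-q) ^ (-(j:ℤ)) * a ^ (-(j:ℤ)) * q ^ ((j:ℤ)^2) * qbin j k *
    qPoch (a * q ^ (2 - 2 * (k:ℤ))) (q^2) k) * cancel
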